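/- Strict bound preservation of the implicit scalar scheme: let ψ be a saturation with saturation level α such that γ = inf_{s ∈ [0,α)} (α − s)/(α·ψ(s)) > 0. Suppose ρ^n, ρ^{n+1} satisfy the implicit scheme relations with no-flux boundary conditions. If 0 < ρ_i^n < α for all 1 ≤ i ≤ M, then 0 < ρ_i^{n+1} < α for all 1 ≤ i ≤ M, with no restriction on Δt. -/
import Mathlib


/-- A *saturation* with saturation level `α > 0`: a continuous non-increasing function
`ψ : [0,∞) → ℝ` with `ψ α = 0` and `(α − s)·ψ s > 0` for every `s ≥ 0`, `s ≠ α`. -/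
def IsSaturation (ψ : ℝ → ℝ) (α : ℝ) : Prop :=
  0 < α ∧ ContinuousOn ψ (Set.Ici 0) ∧
    (∀ s₁ s₂, 0 ≤ s₁ → s₁ ≤ s₂ → ψ s₂ ≤ ψ s₁) ∧
    ψ α = 0 ∧ ∀ s, 0 ≤ s → s ≠ α → 0 < (α - s) * ψ s

/-- The CFL constant `γ = inf_{s ∈ [0,α)} (α − s)/(α·ψ s)`. -/
noncomputable def gammaCFL (ψ : ℝ → ℝ) (α : ℝ) : ℝ :=
  sInf ((fun s => (α - s) / (α * ψ s)) '' Set.Ico 0 α)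

private lemma telescope_Icc (g : ℕ → ℝ) :
    ∀ (a b : ℕ), a ≤ b → ∑ j ∈ Finset.Icc a b, (g j - g (j - 1)) = g b - g (a - 1) := by
  intro a b
  induction b with
  | zero =>
    intro h
    have : a = 0 := Nat.le_zero.mp h
    subst this; simp
  | succ n ih =>
    intro h
    rw [Finset.sum_Icc_succ_top h]
    rcases Nat.lt_or_ge a (n + 1) with h' | h'
    · have ha : a ≤ n := by omega
      rw [ih ha]
      simp
    · have : a = n + 1 := by omega
      subst this
      simp

/-- Strict bound preservation of the implicit scalar scheme with no-flux boundary
conditions: here `u i` denotes `u_{i+1/2}` and `F i` denotes `F_{i+1/2}`. -/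
theorem implicit_scalar_strict_bound_preservation
    (ψ : ℝ → ℝ) (α : ℝ) (hψ : IsSaturation ψ α)
    (hγ : 0 < gammaCFL ψ α)
    (Δx Δt : ℝ) (hΔx : 0 < Δx) (hΔt : 0 < Δt)
    (M : ℕ) (hM : 1 ≤ M)
    (u ρn ρn1 F : ℕ → ℝ)
    (hF0 : F 0 = 0) (hFM : F M = 0)
    (hFdef : ∀ i, 1 ≤ i → i + 1 ≤ M →
      F i = ρn1 i * max (ψ (ρn1 (i + 1))) 0 * max (u i) 0 +
        ρn1 (i + 1) * max (ψ (ρn1 i)) 0 * min (u i) 0)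
    (hscheme : ∀ i, 1 ≤ i → i ≤ M →
      ρn1 i = ρn i - Δt / Δx * (F i - F (i - 1)))
    (hρn : ∀ i, 1 ≤ i → i ≤ M → 0 < ρn i ∧ ρn i < α) :
    ∀ i, 1 ≤ i → i ≤ M → 0 < ρn1 i ∧ ρn1 i < α := by
  classical
  obtain ⟨hα, -, hmono, hψα, -⟩ := hψ
  have hlam : 0 < Δt / Δx := div_pos hΔt hΔx
  -- Upper bound: ρn1 i < α for all admissible i
  have hub : ∀ i, 1 ≤ i → i ≤ M → ρn1 i < α := by
    intro i h1 hiM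
    by_contra hcon
    push_neg at hcon
    have hρpos : (0:ℝ) ≤ ρn1 i := le_trans hα.le hcon
    have hψ0 : max (ψ (ρn1 i)) 0 = 0 := by
      have h := hmono α (ρn1 i) hα.le hcon
      rw [hψα] at h
      exact max_eq_right h
    obtain ⟨c, hc0, hFc⟩ : ∃ c, 0 ≤ c ∧ F i = ρn1 i * c := by
      rcases eq_or_lt_of_le hiM with hiM' | hiM'
      · exact ⟨0, le_refl 0, by rw [hiM', hFM, mul_zero]⟩
      · refine ⟨max (ψ (ρn1 (i+1))) 0 * max (u i) 0,
          mul_nonneg (le_max_right _ _) (le_max_right _ _), ?_⟩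
        rw [hFdef i h1 hiM', hψ0]
        ring
    obtain ⟨e, he0, hFe⟩ : ∃ e, e ≤ 0 ∧ F (i - 1) = ρn1 i * e := by
      rcases eq_or_lt_of_le h1 with h1' | h1'
      · refine ⟨0, le_refl 0, ?_⟩
        rw [← h1']
        simp [hF0]
      · have hd := hFdef (i - 1) (by omega) (by omega)
        have hrw : i - 1 + 1 = i := by omega
        rw [hrw] at hd
        refine ⟨max (ψ (ρn1 (i-1))) 0 * min (u (i-1)) 0,
          mul_nonpos_of_nonneg_of_nonpos (le_max_right _ _) (min_le_right _ _), ?_⟩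
        rw [hd, hψ0]
        ring
    have hs := hscheme i h1 hiM
    rw [hFc, hFe] at hs
    have h0 := (hρn i h1 hiM).2
    have key : 0 ≤ Δt / Δx * (ρn1 i * c - ρn1 i * e) := by
      apply mul_nonneg hlam.le
      have t1 : 0 ≤ ρn1 i * c := mul_nonneg hρpos hc0
      have t2 : ρn1 i * e ≤ 0 := mul_nonpos_of_nonneg_of_nonpos hρpos he0
      linarith
    linarith
  -- Lower bound: 0 < ρn1 i for all admissible i
  have hlb : ∀ i, 1 ≤ i → i ≤ M → 0 < ρn1 i := by
    by_contra hcon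
    push_neg at hcon
    obtain ⟨i₀, h1, hM0, hneg⟩ := hcon
    -- left end a of the maximal nonpositive interval containing i₀
    set T : Set ℕ := {j | 1 ≤ j ∧ j ≤ i₀ ∧ ∀ k, j ≤ k → k ≤ i₀ → ρn1 k ≤ 0} with hTdef
    have hTi : i₀ ∈ T := by
      refine ⟨h1, le_refl _, fun k hk hk' => ?_⟩
      have : k = i₀ := le_antisymm hk' hk
      rwa [this]
    set a := sInf T with ha_def
    have haT : a ∈ T := Nat.sInf_mem ⟨i₀, hTi⟩
    obtain ⟨ha1, hai, haneg⟩ := haT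
    have haleft : a = 1 ∨ (2 ≤ a ∧ 0 < ρn1 (a - 1)) := by
      rcases eq_or_lt_of_le ha1 with h' | h'
      · exact Or.inl h'.symm
      · right
        refine ⟨h', ?_⟩
        by_contra hnp
        push_neg at hnp
        have hmem : a - 1 ∈ T := by
          refine ⟨by omega, by omega, fun k hk hk' => ?_⟩
          rcases Nat.lt_or_ge k a with hk2 | hk2
          · have : k = a - 1 := by omega
            rwa [this]
          · exact haneg k hk2 hk'
        have := Nat.sInf_le hmem
        omega
    -- right end b
    set P : ℕ → Prop := fun j => i₀ ≤ j ∧ ∀ k, i₀ ≤ k → k ≤ j → ρn1 k ≤ 0 with hPdef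
    have hPi : P i₀ := by
      refine ⟨le_refl _, fun k hk hk' => ?_⟩
      have : k = i₀ := le_antisymm hk' hk
      rwa [this]
    set b := Nat.findGreatest P M with hb_def
    have hPb : P b := Nat.findGreatest_spec hM0 hPi
    have hbM : b ≤ M := Nat.findGreatest_le M
    have hbi : i₀ ≤ b := hPb.1
    have hbneg := hPb.2
    have hbright : b = M ∨ 0 < ρn1 (b + 1) := by
      rcases eq_or_lt_of_le hbM with h' | h'
      · exact Or.inl h'
      · right
        have hnP : ¬ P (b + 1) :=
          Nat.findGreatest_is_greatest (n := M) (k := b + 1) (by exact Nat.lt_succ_self _) (by omega)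
        by_contra hnb
        push_neg at hnb
        apply hnP
        refine ⟨by omega, fun k hk hk' => ?_⟩
        rcases Nat.lt_or_ge b k with hk4 | hk4
        · have : k = b + 1 := by omega
          rwa [this]
        · exact hbneg k hk hk4
    -- all cells in [a,b] are nonpositive
    have hall : ∀ j, a ≤ j → j ≤ b → ρn1 j ≤ 0 := by
      intro j hj hj'
      rcases le_or_gt j i₀ with h | h
      · exact haneg j hj h
      · exact hbneg j h.le hj'
    have hab : a ≤ b := le_trans hai hbi
    -- sum the scheme over [a,b] and telescope
    have hsum : ∑ j ∈ Finset.Icc a b, (ρn1 j - ρn j)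
        = -(Δt / Δx) * (F b - F (a - 1)) := by
      have hcong : ∀ j ∈ Finset.Icc a b,
          ρn1 j - ρn j = -(Δt / Δx) * (F j - F (j - 1)) := by
        intro j hj
        rw [Finset.mem_Icc] at hj
        have := hscheme j (by omega) (by omega)
        linarith
      rw [Finset.sum_congr rfl hcong, ← Finset.mul_sum, telescope_Icc F a b hab]
    -- sign of F b
    have hFb : F b ≤ 0 := by
      rcases eq_or_lt_of_le hbM with hbM' | hbM'
      · rw [hbM', hFM]
      · have h' : 0 < ρn1 (b + 1) := hbright.resolve_left (by omega)
        have hd := hFdef b (by omega) (by omega)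
        rw [hd]
        have t1 : ρn1 b * max (ψ (ρn1 (b+1))) 0 * max (u b) 0 ≤ 0 := by
          apply mul_nonpos_of_nonpos_of_nonneg _ (le_max_right _ _)
          exact mul_nonpos_of_nonpos_of_nonneg (hall b hab (le_refl b)) (le_max_right _ _)
        have t2 : ρn1 (b+1) * max (ψ (ρn1 b)) 0 * min (u b) 0 ≤ 0 := by
          apply mul_nonpos_of_nonneg_of_nonpos _ (min_le_right _ _)
          exact mul_nonneg h'.le (le_max_right _ _)
        linarith
    -- sign of F (a-1)
    have hFa : 0 ≤ F (a - 1) := by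
      rcases haleft with h' | ⟨ha2, h'⟩
      · rw [h']
        simp [hF0]
      · have hd := hFdef (a - 1) (by omega) (by omega)
        have hrw : a - 1 + 1 = a := by omega
        rw [hrw] at hd
        rw [hd]
        have t1 : 0 ≤ ρn1 (a-1) * max (ψ (ρn1 a)) 0 * max (u (a-1)) 0 := by
          apply mul_nonneg _ (le_max_right _ _)
          exact mul_nonneg h'.le (le_max_right _ _)
        have t2 : 0 ≤ ρn1 a * max (ψ (ρn1 (a-1))) 0 * min (u (a-1)) 0 := by
          have hx : ρn1 a * max (ψ (ρn1 (a-1))) 0 ≤ 0 :=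
            mul_nonpos_of_nonpos_of_nonneg (hall a (le_refl a) hab) (le_max_right _ _)
          have hy : min (u (a-1)) 0 ≤ 0 := min_le_right _ _
          nlinarith [mul_nonneg (neg_nonneg.2 hx) (neg_nonneg.2 hy)]
        linarith
    -- contradiction
    have hS1 : ∑ j ∈ Finset.Icc a b, ρn1 j ≤ 0 := by
      apply Finset.sum_nonpos
      intro j hj
      rw [Finset.mem_Icc] at hj
      exact hall j hj.1 hj.2
    have hS2 : 0 < ∑ j ∈ Finset.Icc a b, ρn j := by
      apply Finset.sum_pos
      · intro j hj
        rw [Finset.mem_Icc] at hj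
        exact (hρn j (by omega) (by omega)).1
      · exact Finset.nonempty_Icc.mpr hab
    have hnn : 0 ≤ -(Δt / Δx) * (F b - F (a - 1)) := by
      have : 0 ≤ Δt / Δx * (F (a - 1) - F b) := mul_nonneg hlam.le (by linarith)
      linarith [this]
    rw [Finset.sum_sub_distrib] at hsum
    linarith
  exact fun i hi1 hiM => ⟨hlb i hi1 hiM, hub i hi1 hiM⟩
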